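/- Let μ be a probability vector on a finite set X and R ∈ [0,2]. The maximum of the entropy H(ν) = −Σ_i ν_i log ν_i over the TV ball B_R(μ) equals the min-max value: min over codeword length functions ℓ ∈ ℝ₊^X satisfying Kraft's inequality Σ_i e^{−ℓ_i} ≤ 1 of max over ν ∈ B_R(μ) of Σ_i ℓ_i ν_i. -/

import Mathlib

open Real Finset Filter

section helpers
variable {X : Type*} [Fintype X]

private def memB (μ : X → ℝ) (R : ℝ) (ν : X → ℝ) : Prop :=
  (∀ i, 0 ≤ ν i) ∧ ∑ i, ν i = 1 ∧ ∑ i, |ν i - μ i| ≤ R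

private lemma xlogx_conv {x y : ℝ} (hx : 0 ≤ x) (hy : 0 ≤ y) (h0 : y = 0 → x = 0) :
    x * Real.log y + (x - y) ≤ x * Real.log x := by
  rcases eq_or_lt_of_le hx with h | h
  · simp [← h]; linarith
  · have hy' : 0 < y := by
      rcases eq_or_lt_of_le hy with h' | h'
      · exact absurd (h0 h'.symm) h.ne'
      · exact h'
    have h1 := Real.log_le_sub_one_of_pos (div_pos hy' h)
    rw [Real.log_div hy'.ne' h.ne'] at h1
    have h2 := mul_le_mul_of_nonneg_left h1 h.le
    have h3 : x * (y / x - 1) = y - x := by field_simp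
    nlinarith

private lemma gibbs {X : Type*} [Fintype X] (ν ℓ : X → ℝ) (hν0 : ∀ i, 0 ≤ ν i)
    (hν1 : ∑ i, ν i = 1) (hk : ∑ i, Real.exp (-ℓ i) ≤ 1) :
    -∑ i, ν i * Real.log (ν i) ≤ ∑ i, ℓ i * ν i := by
  have key : ∀ i : X, -(ν i * Real.log (ν i)) - ℓ i * ν i ≤ Real.exp (-ℓ i) - ν i := by
    intro i
    rcases eq_or_lt_of_le (hν0 i) with h | h
    · rw [← h]; simp; positivity
    · have h1 := Real.log_le_sub_one_of_pos (div_pos (Real.exp_pos (-ℓ i)) h)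
      rw [Real.log_div (Real.exp_pos _).ne' h.ne', Real.log_exp] at h1
      have h2 := mul_le_mul_of_nonneg_left h1 h.le
      have h3 : ν i * (Real.exp (-ℓ i) / ν i - 1) = Real.exp (-ℓ i) - ν i := by field_simp
      nlinarith
  have hs := Finset.sum_le_sum (fun i (_ : i ∈ Finset.univ) => key i)
  rw [Finset.sum_sub_distrib, Finset.sum_sub_distrib, Finset.sum_neg_distrib] at hs
  linarith

private lemma memB_le_one {μ : X → ℝ} {R : ℝ} {ν : X → ℝ} (h : memB μ R ν) (i : X) :
    ν i ≤ 1 := by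
  obtain ⟨h0, h1, -⟩ := h
  calc ν i ≤ ∑ j, ν j := Finset.single_le_sum (fun j _ => h0 j) (Finset.mem_univ i)
    _ = 1 := h1

private lemma memB_comb {μ : X → ℝ} {R : ℝ} {a b : X → ℝ} (ha : memB μ R a)
    (hb : memB μ R b) {t : ℝ} (ht0 : 0 ≤ t) (ht1 : t ≤ 1) :
    memB μ R (fun i => a i + t * (b i - a i)) := by
  obtain ⟨ha0, ha1, ha2⟩ := ha
  obtain ⟨hb0, hb1, hb2⟩ := hb
  refine ⟨fun i => ?_, ?_, ?_⟩
  · show (0:ℝ) ≤ a i + t * (b i - a i)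
    nlinarith [ha0 i, hb0 i]
  · simp only [Finset.sum_add_distrib, ← Finset.mul_sum, Finset.sum_sub_distrib, ha1, hb1]
    ring
  · calc ∑ i, |a i + t * (b i - a i) - μ i|
        = ∑ i, |(1 - t) * (a i - μ i) + t * (b i - μ i)| := by
          apply Finset.sum_congr rfl; intro i _; ring_nf
      _ ≤ ∑ i, ((1 - t) * |a i - μ i| + t * |b i - μ i|) := by
          apply Finset.sum_le_sum; intro i _
          calc |(1 - t) * (a i - μ i) + t * (b i - μ i)|
              ≤ |(1 - t) * (a i - μ i)| + |t * (b i - μ i)| := abs_add_le _ _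
            _ = (1 - t) * |a i - μ i| + t * |b i - μ i| := by
                rw [abs_mul, abs_mul, abs_of_nonneg (by linarith : (0:ℝ) ≤ 1 - t),
                  abs_of_nonneg ht0]
      _ = (1 - t) * ∑ i, |a i - μ i| + t * ∑ i, |b i - μ i| := by
          rw [Finset.sum_add_distrib, Finset.mul_sum, Finset.mul_sum]
      _ ≤ (1 - t) * R + t * R := by
          have := mul_le_mul_of_nonneg_left ha2 (by linarith : (0:ℝ) ≤ 1 - t)
          have := mul_le_mul_of_nonneg_left hb2 ht0
          linarith
      _ = R := by ring

private lemma exists_max (μ : X → ℝ) (R : ℝ) (hμ : memB μ R μ) :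
    ∃ a, memB μ R a ∧ ∀ ν, memB μ R ν → -∑ i, ν i * Real.log (ν i) ≤ -∑ i, a i * Real.log (a i) := by
  have hclosed : IsClosed {ν : X → ℝ | memB μ R ν} := by
    have h1 : IsClosed {ν : X → ℝ | ∀ i, 0 ≤ ν i} := by
      have : {ν : X → ℝ | ∀ i, 0 ≤ ν i} = ⋂ i, {ν : X → ℝ | 0 ≤ ν i} := by
        ext ν; simp
      rw [this]
      exact isClosed_iInter fun i => isClosed_le continuous_const (continuous_apply i)
    have h2 : IsClosed {ν : X → ℝ | ∑ i, ν i = 1} :=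
      isClosed_eq (continuous_finset_sum _ fun i _ => continuous_apply i) continuous_const
    have h3 : IsClosed {ν : X → ℝ | ∑ i, |ν i - μ i| ≤ R} :=
      isClosed_le (continuous_finset_sum _ fun i _ =>
        ((continuous_apply i).sub continuous_const).abs) continuous_const
    have : {ν : X → ℝ | memB μ R ν} =
        {ν : X → ℝ | ∀ i, 0 ≤ ν i} ∩ ({ν : X → ℝ | ∑ i, ν i = 1} ∩ {ν : X → ℝ | ∑ i, |ν i - μ i| ≤ R}) := by
      ext ν; simp [memB, Set.mem_inter_iff, and_assoc]
    rw [this]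
    exact h1.inter (h2.inter h3)
  have hcomp : IsCompact {ν : X → ℝ | memB μ R ν} := by
    apply IsCompact.of_isClosed_subset (isCompact_univ_pi (fun i => isCompact_Icc (a := (0:ℝ)) (b := 1))) hclosed
    intro ν hν
    simp only [Set.mem_pi, Set.mem_univ, Set.mem_Icc, forall_true_left]
    exact fun i => ⟨hν.1 i, memB_le_one hν i⟩
  have hcont : ContinuousOn (fun ν : X → ℝ => -∑ i, ν i * Real.log (ν i)) {ν : X → ℝ | memB μ R ν} := by
    apply Continuous.continuousOn
    exact (continuous_finset_sum _ fun i _ => Real.continuous_mul_log.comp (continuous_apply i)).neg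
  obtain ⟨a, haB, hamax⟩ := hcomp.exists_isMaxOn ⟨μ, hμ⟩ hcont
  exact ⟨a, haB, fun ν hν => hamax hν⟩

private lemma key_ineq {μ : X → ℝ} {R : ℝ} {a b : X → ℝ} (ha : memB μ R a)
    (hmax : ∀ ν, memB μ R ν → -∑ i, ν i * Real.log (ν i) ≤ -∑ i, a i * Real.log (a i))
    (hb : memB μ R b) {t : ℝ} (ht0 : 0 < t) (ht1 : t < 1) :
    ∑ i, a i * Real.log (a i + t * (b i - a i)) ≤
      ∑ i, b i * Real.log (a i + t * (b i - a i)) := by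
  set c : X → ℝ := fun i => a i + t * (b i - a i) with hc_def
  have hc : memB μ R c := memB_comb ha hb ht0.le ht1.le
  have hmaxc : ∑ i, a i * Real.log (a i) ≤ ∑ i, c i * Real.log (c i) := by
    have := hmax c hc; linarith
  have hper : ∀ i : X, a i * Real.log (c i) + (a i - c i) ≤ a i * Real.log (a i) := by
    intro i
    apply xlogx_conv (ha.1 i) (hc.1 i)
    intro h0
    have hai := ha.1 i
    have hbi := hb.1 i
    have : a i + t * (b i - a i) = 0 := h0
    nlinarith
  have hsum := Finset.sum_le_sum (fun i (_ : i ∈ Finset.univ) => hper i)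
  rw [Finset.sum_add_distrib, Finset.sum_sub_distrib] at hsum
  rw [ha.2.1, hc.2.1] at hsum
  -- Σ a log c ≤ Σ a log a ≤ Σ c log c
  have h1 : ∑ i, a i * Real.log (c i) ≤ ∑ i, c i * Real.log (c i) := by linarith
  have h2 : ∑ i, c i * Real.log (c i)
      = (1 - t) * ∑ i, a i * Real.log (c i) + t * ∑ i, b i * Real.log (c i) := by
    rw [Finset.mul_sum, Finset.mul_sum, ← Finset.sum_add_distrib]
    apply Finset.sum_congr rfl
    intro i _
    show (a i + t * (b i - a i)) * Real.log (c i) = _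
    ring
  nlinarith [h1, h2]

private lemma support_lemma {μ : X → ℝ} {R : ℝ} {a b : X → ℝ} (ha : memB μ R a)
    (hmax : ∀ ν, memB μ R ν → -∑ i, ν i * Real.log (ν i) ≤ -∑ i, a i * Real.log (a i))
    (hb : memB μ R b) {i0 : X} (hi0 : a i0 = 0) : b i0 = 0 := by
  classical
  by_contra hne
  have hbi : 0 < b i0 := lt_of_le_of_ne (hb.1 i0) (Ne.symm hne)
  set K : ℝ := ∑ j ∈ Finset.univ.filter (fun j => 0 < a j), (-Real.log (a j / 2)) with hK
  have hK0 : 0 ≤ K := by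
    apply Finset.sum_nonneg
    intro j hj
    rcases Finset.mem_filter.mp hj with ⟨-, haj⟩
    have h1 : a j / 2 ≤ 1 := by have := memB_le_one ha j; linarith
    have := Real.log_nonpos (by linarith) h1
    linarith
  set t : ℝ := min (1/2) (Real.exp ((-K - b i0 * Real.log (b i0) - 1) / b i0)) with htdef
  have ht0 : 0 < t := lt_min (by norm_num) (Real.exp_pos _)
  have ht2 : t ≤ 1/2 := min_le_left _ _
  have ht1 : t < 1 := by linarith
  have hkey := key_ineq ha hmax hb ht0 ht1
  have hPhi : 0 ≤ ∑ j, (b j - a j) * Real.log (a j + t * (b j - a j)) := by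
    have : ∑ j, (b j - a j) * Real.log (a j + t * (b j - a j))
        = ∑ j, b j * Real.log (a j + t * (b j - a j))
          - ∑ j, a j * Real.log (a j + t * (b j - a j)) := by
      rw [← Finset.sum_sub_distrib]; apply Finset.sum_congr rfl; intro j _; ring
    linarith [hkey, this]
  -- split the sum
  have hsplit := Finset.sum_filter_add_sum_filter_not Finset.univ (fun j => 0 < a j)
    (fun j => (b j - a j) * Real.log (a j + t * (b j - a j)))
  -- bound the positive-support part by K
  have hpos : ∑ j ∈ Finset.univ.filter (fun j => 0 < a j),
      (b j - a j) * Real.log (a j + t * (b j - a j)) ≤ K := by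
    apply Finset.sum_le_sum
    intro j hj
    simp only [Finset.mem_filter] at hj
    have haj : 0 < a j := hj.2
    have hbj := hb.1 j
    have hb1 := memB_le_one hb j
    have ha1 := memB_le_one ha j
    have hcl : a j / 2 ≤ a j + t * (b j - a j) := by nlinarith
    have hcu : a j + t * (b j - a j) ≤ 1 := by nlinarith
    have hlogl : Real.log (a j / 2) ≤ Real.log (a j + t * (b j - a j)) :=
      Real.log_le_log (by positivity) hcl
    have hlogu : Real.log (a j + t * (b j - a j)) ≤ 0 :=
      Real.log_nonpos (by nlinarith) hcu
    nlinarith [hlogl, hlogu]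
  -- bound the zero part
  have hzero : ∑ j ∈ Finset.univ.filter (fun j => ¬ 0 < a j),
      (b j - a j) * Real.log (a j + t * (b j - a j)) ≤ b i0 * Real.log (t * b i0) := by
    have hmem : i0 ∈ Finset.univ.filter (fun j => ¬ 0 < a j) := by
      simp [hi0]
    rw [← Finset.add_sum_erase _ _ hmem]
    have hi0term : (b i0 - a i0) * Real.log (a i0 + t * (b i0 - a i0))
        = b i0 * Real.log (t * b i0) := by
      rw [hi0]; ring_nf
    rw [hi0term]
    have : ∑ j ∈ (Finset.univ.filter (fun j => ¬ 0 < a j)).erase i0,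
        (b j - a j) * Real.log (a j + t * (b j - a j)) ≤ 0 := by
      apply Finset.sum_nonpos
      intro j hj
      have hj' := Finset.mem_of_mem_erase hj
      simp only [Finset.mem_filter] at hj'
      have haj : a j = 0 := le_antisymm (not_lt.mp hj'.2) (ha.1 j)
      rw [haj]
      simp only [zero_add, sub_zero]
      apply mul_nonpos_of_nonneg_of_nonpos (hb.1 j)
      apply Real.log_nonpos
      · exact mul_nonneg ht0.le (hb.1 j)
      · nlinarith [memB_le_one hb j, hb.1 j]
    linarith
  -- combine
  have hlogt : Real.log t ≤ (-K - b i0 * Real.log (b i0) - 1) / b i0 := by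
    calc Real.log t ≤ Real.log (Real.exp ((-K - b i0 * Real.log (b i0) - 1) / b i0)) :=
          Real.log_le_log ht0 (min_le_right _ _)
      _ = _ := Real.log_exp _
  have hmul : b i0 * Real.log t ≤ -K - b i0 * Real.log (b i0) - 1 := by
    have := mul_le_mul_of_nonneg_left hlogt hbi.le
    rwa [mul_div_cancel₀ _ hbi.ne'] at this
  have hlogsplit : Real.log (t * b i0) = Real.log t + Real.log (b i0) :=
    Real.log_mul ht0.ne' hbi.ne'
  nlinarith [hPhi, hsplit, hpos, hzero, hmul, hlogsplit]

private lemma tendsto_aux {a b c : ℝ} (h : 0 < a ∨ c = 0) :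
    Filter.Tendsto (fun t : ℝ => c * Real.log (a + t * (b - a)))
      (nhdsWithin 0 (Set.Ioi 0)) (nhds (c * Real.log a)) := by
  rcases h with h | h
  · have hf : ContinuousAt (fun t : ℝ => a + t * (b - a)) 0 :=
      continuousAt_const.add (continuousAt_id.mul continuousAt_const)
    have hval : (fun t : ℝ => a + t * (b - a)) 0 = a := by norm_num
    have hlog : ContinuousAt (fun t : ℝ => Real.log (a + t * (b - a))) 0 := by
      apply ContinuousAt.log hf
      simpa using h.ne'
    have hc : ContinuousAt (fun t : ℝ => c * Real.log (a + t * (b - a))) 0 :=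
      continuousAt_const.mul hlog
    have h2 : Filter.Tendsto (fun t : ℝ => c * Real.log (a + t * (b - a)))
        (nhdsWithin 0 (Set.Ioi 0)) (nhds (c * Real.log (a + 0 * (b - a)))) :=
      hc.tendsto.mono_left nhdsWithin_le_nhds
    simpa using h2
  · simp only [h, zero_mul]
    exact tendsto_const_nhds

private lemma grad_lemma {μ : X → ℝ} {R : ℝ} {a b : X → ℝ} (ha : memB μ R a)
    (hmax : ∀ ν, memB μ R ν → -∑ i, ν i * Real.log (ν i) ≤ -∑ i, a i * Real.log (a i))
    (hb : memB μ R b) :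
    ∑ i, a i * Real.log (a i) ≤ ∑ i, b i * Real.log (a i) := by
  have hF : Filter.Tendsto (fun t : ℝ => ∑ i, a i * Real.log (a i + t * (b i - a i)))
      (nhdsWithin 0 (Set.Ioi 0)) (nhds (∑ i, a i * Real.log (a i))) := by
    apply tendsto_finset_sum
    intro i _
    apply tendsto_aux
    rcases eq_or_lt_of_le (ha.1 i) with h | h
    · exact Or.inr h.symm
    · exact Or.inl h
  have hG : Filter.Tendsto (fun t : ℝ => ∑ i, b i * Real.log (a i + t * (b i - a i)))
      (nhdsWithin 0 (Set.Ioi 0)) (nhds (∑ i, b i * Real.log (a i))) := by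
    apply tendsto_finset_sum
    intro i _
    apply tendsto_aux
    rcases eq_or_lt_of_le (ha.1 i) with h | h
    · exact Or.inr (support_lemma ha hmax hb h.symm)
    · exact Or.inl h
  apply le_of_tendsto_of_tendsto hF hG
  filter_upwards [Ioo_mem_nhdsGT_of_mem (Set.mem_Ico.mpr ⟨le_refl (0:ℝ), zero_lt_one⟩)]
  intro t ht
  exact key_ineq ha hmax hb ht.1 ht.2

end helpers

theorem max_entropy_eq_minmax_codelength {X : Type*} [Fintype X] [Nonempty X] (μ : X → ℝ)
    (hμ0 : ∀ i, 0 ≤ μ i) (hμ1 : ∑ i, μ i = 1)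
    (R : ℝ) (hR0 : 0 ≤ R) (hR2 : R ≤ 2) :
    sSup {h : ℝ | ∃ ν : X → ℝ, (∀ i, 0 ≤ ν i) ∧ ∑ i, ν i = 1 ∧
        ∑ i, |ν i - μ i| ≤ R ∧ h = -∑ i, ν i * Real.log (ν i)} =
    sInf {m : ℝ | ∃ ℓ : X → ℝ, (∀ i, 0 ≤ ℓ i) ∧ ∑ i, Real.exp (-ℓ i) ≤ 1 ∧
        m = sSup {s : ℝ | ∃ ν : X → ℝ, (∀ i, 0 ≤ ν i) ∧ ∑ i, ν i = 1 ∧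
          ∑ i, |ν i - μ i| ≤ R ∧ s = ∑ i, ℓ i * ν i}} := by
  classical
  have hμB : memB μ R μ := by
    refine ⟨hμ0, hμ1, ?_⟩
    simp
    exact hR0
  obtain ⟨a, haB, hmax⟩ := exists_max μ R hμB
  set Ha : ℝ := -∑ i, a i * Real.log (a i) with hHa
  -- LHS
  have hLHS : sSup {h : ℝ | ∃ ν : X → ℝ, (∀ i, 0 ≤ ν i) ∧ ∑ i, ν i = 1 ∧
      ∑ i, |ν i - μ i| ≤ R ∧ h = -∑ i, ν i * Real.log (ν i)} = Ha := by
    apply IsGreatest.csSup_eq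
    constructor
    · exact ⟨a, haB.1, haB.2.1, haB.2.2, rfl⟩
    · rintro h ⟨ν, h0, h1, h2, rfl⟩
      exact hmax ν ⟨h0, h1, h2⟩
  rw [hLHS]
  -- inner sup facts
  have hinner_mem : ∀ ℓ : X → ℝ, (∑ i, ℓ i * μ i) ∈
      {s : ℝ | ∃ ν : X → ℝ, (∀ i, 0 ≤ ν i) ∧ ∑ i, ν i = 1 ∧
        ∑ i, |ν i - μ i| ≤ R ∧ s = ∑ i, ℓ i * ν i} :=
    fun ℓ => ⟨μ, hμB.1, hμB.2.1, hμB.2.2, rfl⟩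
  have hinner_bdd : ∀ ℓ : X → ℝ, (∀ i, 0 ≤ ℓ i) → BddAbove
      {s : ℝ | ∃ ν : X → ℝ, (∀ i, 0 ≤ ν i) ∧ ∑ i, ν i = 1 ∧
        ∑ i, |ν i - μ i| ≤ R ∧ s = ∑ i, ℓ i * ν i} := by
    intro ℓ hℓ0
    refine ⟨∑ i, ℓ i, ?_⟩
    rintro s ⟨ν, h0, h1, h2, rfl⟩
    calc ∑ i, ℓ i * ν i ≤ ∑ i, ℓ i * 1 := Finset.sum_le_sum fun i _ =>
          mul_le_mul_of_nonneg_left (memB_le_one ⟨h0, h1, h2⟩ i) (hℓ0 i)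
      _ = ∑ i, ℓ i := by simp
  -- every member of RHS set is ≥ Ha
  have hlow : ∀ m ∈ {m : ℝ | ∃ ℓ : X → ℝ, (∀ i, 0 ≤ ℓ i) ∧ ∑ i, Real.exp (-ℓ i) ≤ 1 ∧
      m = sSup {s : ℝ | ∃ ν : X → ℝ, (∀ i, 0 ≤ ν i) ∧ ∑ i, ν i = 1 ∧
        ∑ i, |ν i - μ i| ≤ R ∧ s = ∑ i, ℓ i * ν i}}, Ha ≤ m := by
    rintro m ⟨ℓ, hℓ0, hℓk, rfl⟩
    have h1 : Ha ≤ ∑ i, ℓ i * a i := gibbs a ℓ haB.1 haB.2.1 hℓk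
    have h2 : (∑ i, ℓ i * a i) ≤ sSup {s : ℝ | ∃ ν : X → ℝ, (∀ i, 0 ≤ ν i) ∧ ∑ i, ν i = 1 ∧
        ∑ i, |ν i - μ i| ≤ R ∧ s = ∑ i, ℓ i * ν i} :=
      le_csSup (hinner_bdd ℓ hℓ0) ⟨a, haB.1, haB.2.1, haB.2.2, rfl⟩
    linarith
  apply le_antisymm
  · -- Ha ≤ sInf
    apply le_csInf
    · -- nonempty : use ℓ = log card
      have hcard : (0:ℝ) < Fintype.card X := by
        have := Fintype.card_pos (α := X); positivity
      refine ⟨_, ⟨fun _ => Real.log (Fintype.card X), fun i => Real.log_nonneg (by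
        exact_mod_cast Fintype.card_pos), ?_, rfl⟩⟩
      have : ∀ i : X, Real.exp (-Real.log (Fintype.card X)) = (Fintype.card X : ℝ)⁻¹ := by
        intro i; rw [Real.exp_neg, Real.exp_log hcard]
      rw [Finset.sum_congr rfl (fun i _ => this i)]
      simp [Finset.card_univ]
    · exact hlow
  · -- sInf ≤ Ha
    apply le_of_forall_pos_le_add
    intro ε hε
    have hε1 : 0 < 1 - Real.exp (-ε) := by
      have : Real.exp (-ε) < 1 := Real.exp_lt_one_iff.mpr (by linarith)
      linarith
    have hcard1 : (1:ℝ) ≤ Fintype.card X := by exact_mod_cast Fintype.card_pos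
    set ℓ : X → ℝ := fun i => if a i = 0
      then Real.log ((Fintype.card X : ℝ) / (1 - Real.exp (-ε)))
      else ε - Real.log (a i) with hℓdef
    have hℓ0 : ∀ i, 0 ≤ ℓ i := by
      intro i
      by_cases h : a i = 0 <;> simp only [hℓdef, h, if_true, if_false]
      · apply Real.log_nonneg
        rw [le_div_iff₀ hε1]
        have := Real.exp_pos (-ε)
        linarith
      · have h1 : Real.log (a i) ≤ 0 :=
          Real.log_nonpos (haB.1 i) (memB_le_one haB i)
        linarith
    have hℓk : ∑ i, Real.exp (-ℓ i) ≤ 1 := by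
      have hper : ∀ i : X, Real.exp (-ℓ i) ≤
          (1 - Real.exp (-ε)) / (Fintype.card X : ℝ) + Real.exp (-ε) * a i := by
        intro i
        by_cases h : a i = 0 <;> simp only [hℓdef, h, if_true, if_false]
        · rw [Real.exp_neg, Real.exp_log (by positivity), inv_div]
          simp
        · have hai : 0 < a i := lt_of_le_of_ne (haB.1 i) (Ne.symm h)
          have heq : Real.exp (-(ε - Real.log (a i))) = Real.exp (-ε) * a i := by
            rw [neg_sub, sub_eq_add_neg, Real.exp_add, Real.exp_log hai]
            ring
          rw [heq]
          have : 0 ≤ (1 - Real.exp (-ε)) / (Fintype.card X : ℝ) := by positivity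
          linarith
      calc ∑ i, Real.exp (-ℓ i)
          ≤ ∑ i, ((1 - Real.exp (-ε)) / (Fintype.card X : ℝ) + Real.exp (-ε) * a i) :=
            Finset.sum_le_sum fun i _ => hper i
        _ = (1 - Real.exp (-ε)) + Real.exp (-ε) * ∑ i, a i := by
            rw [Finset.sum_add_distrib, Finset.sum_const, ← Finset.mul_sum, Finset.card_univ]
            have hcard0 : (Fintype.card X : ℝ) ≠ 0 := by positivity
            rw [nsmul_eq_mul, mul_div_cancel₀ _ hcard0]
        _ = 1 := by rw [haB.2.1]; ring
    -- the inner sup for this ℓ is ≤ Ha + ε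
    have hbound : ∀ s ∈ {s : ℝ | ∃ ν : X → ℝ, (∀ i, 0 ≤ ν i) ∧ ∑ i, ν i = 1 ∧
        ∑ i, |ν i - μ i| ≤ R ∧ s = ∑ i, ℓ i * ν i}, s ≤ Ha + ε := by
      rintro s ⟨ν, h0, h1, h2, rfl⟩
      have hν : memB μ R ν := ⟨h0, h1, h2⟩
      have hterm : ∀ i : X, ℓ i * ν i = ε * ν i - ν i * Real.log (a i) := by
        intro i
        by_cases h : a i = 0
        · have hνi : ν i = 0 := support_lemma haB hmax hν h
          simp [hνi]
        · simp only [hℓdef, h, if_false]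
          ring
      rw [Finset.sum_congr rfl fun i _ => hterm i, Finset.sum_sub_distrib, ← Finset.mul_sum, h1]
      have := grad_lemma haB hmax hν
      rw [hHa]
      linarith
    have hsup_le : sSup {s : ℝ | ∃ ν : X → ℝ, (∀ i, 0 ≤ ν i) ∧ ∑ i, ν i = 1 ∧
        ∑ i, |ν i - μ i| ≤ R ∧ s = ∑ i, ℓ i * ν i} ≤ Ha + ε :=
      csSup_le ⟨_, hinner_mem ℓ⟩ hbound
    have hmem : sSup {s : ℝ | ∃ ν : X → ℝ, (∀ i, 0 ≤ ν i) ∧ ∑ i, ν i = 1 ∧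
        ∑ i, |ν i - μ i| ≤ R ∧ s = ∑ i, ℓ i * ν i} ∈
        {m : ℝ | ∃ ℓ : X → ℝ, (∀ i, 0 ≤ ℓ i) ∧ ∑ i, Real.exp (-ℓ i) ≤ 1 ∧
          m = sSup {s : ℝ | ∃ ν : X → ℝ, (∀ i, 0 ≤ ν i) ∧ ∑ i, ν i = 1 ∧
            ∑ i, |ν i - μ i| ≤ R ∧ s = ∑ i, ℓ i * ν i}} := ⟨ℓ, hℓ0, hℓk, rfl⟩
    exact le_trans (csInf_le ⟨Ha, hlow⟩ hmem) hsup_le
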